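/- Let p ≥ 1 and 0 < ε < 1/2. Let V = [[M, X₀],[N, Y₀]] ∈ ℝ^{2p×2p} be orthogonal with p×p blocks satisfying ‖M − I_p‖₂ < ε, ‖N‖₂ < ε, ‖X₀‖₂ < ε, and ‖Y₀ − I_p‖₂ < ε². Then ‖V − I_{2p}‖₂ < 2ε, and every skew-symmetric L ∈ ℝ^{2p×2p} with exp_m(L) = V and ‖L‖₂ ≤ π satisfies ‖L‖₂ < 2ε·√(1 − ε²)/(1 − 2ε²). -/

import Mathlib

open Matrix

/-- Spectral norm (largest singular value) of a real matrix: the operator norm of the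
induced linear map between Euclidean spaces. -/
noncomputable def sNorm {m n : Type*} [Fintype m] [Fintype n] [DecidableEq n]
    (A : Matrix m n ℝ) : ℝ :=
  ‖(Matrix.toEuclideanLin A).toContinuousLinearMap‖

noncomputable def toE {ι : Type*} (x : ι → ℝ) : EuclideanSpace ℝ ι :=
  (WithLp.equiv 2 (ι → ℝ)).symm x

section Helpers

variable {ι : Type*} [Fintype ι] [DecidableEq ι]

lemma sNorm_nonneg (A : Matrix ι ι ℝ) : 0 ≤ sNorm A := norm_nonneg _

lemma norm_toE_mulVec_le (A : Matrix ι ι ℝ) (x : ι → ℝ) :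
    ‖toE (A *ᵥ x)‖ ≤ sNorm A * ‖toE x‖ := by
  have h := ((Matrix.toEuclideanLin A).toContinuousLinearMap).le_opNorm (toE x)
  have h2 : ((Matrix.toEuclideanLin A).toContinuousLinearMap) (toE x) = toE (A *ᵥ x) := rfl
  rw [h2] at h
  exact h

lemma sNorm_le_bound (A : Matrix ι ι ℝ) {c : ℝ} (hc : 0 ≤ c)
    (h : ∀ x : ι → ℝ, ‖toE (A *ᵥ x)‖ ≤ c * ‖toE x‖) : sNorm A ≤ c := by
  refine ContinuousLinearMap.opNorm_le_bound _ hc fun x => ?_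
  exact h (WithLp.equiv 2 (ι → ℝ) x)

lemma norm_toE_sq (x : ι → ℝ) : ‖toE x‖ ^ 2 = x ⬝ᵥ x := by
  have h := EuclideanSpace.norm_eq (toE x)
  rw [h, Real.sq_sqrt (by positivity)]
  simp [toE, dotProduct, Real.norm_eq_abs, sq_abs, pow_two]

lemma exists_attains [Nonempty ι] (A : Matrix ι ι ℝ) :
    ∃ x : ι → ℝ, ‖toE x‖ = 1 ∧ ‖toE (A *ᵥ x)‖ = sNorm A := by
  obtain ⟨i⟩ := ‹Nonempty ι›
  set T := (Matrix.toEuclideanLin A).toContinuousLinearMap with hT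
  have hsph : (Metric.sphere (0 : EuclideanSpace ℝ ι) 1).Nonempty := by
    refine ⟨EuclideanSpace.single i (1 : ℝ), ?_⟩
    simp [mem_sphere_zero_iff_norm]
  obtain ⟨v, hv_mem, hv_max⟩ := (isCompact_sphere (0 : EuclideanSpace ℝ ι) 1).exists_isMaxOn hsph
    ((continuous_norm.comp T.continuous).continuousOn)
  have hv : ‖v‖ = 1 := mem_sphere_zero_iff_norm.mp hv_mem
  refine ⟨WithLp.equiv 2 (ι → ℝ) v, hv, ?_⟩
  have h1 : ‖T v‖ ≤ sNorm A := by
    have := T.le_opNorm v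
    rw [hv, mul_one] at this
    exact this
  have h2 : sNorm A ≤ ‖T v‖ := by
    refine ContinuousLinearMap.opNorm_le_bound _ (norm_nonneg _) fun x => ?_
    rcases eq_or_ne x 0 with rfl | hx
    · simp
    · have hxn : ‖x‖ ≠ 0 := norm_ne_zero_iff.mpr hx
      have hmem : (‖x‖⁻¹ • x) ∈ Metric.sphere (0 : EuclideanSpace ℝ ι) 1 := by
        simp [mem_sphere_zero_iff_norm, norm_smul, abs_of_nonneg (inv_nonneg.mpr (norm_nonneg x)),
          inv_mul_cancel₀ hxn]
      have := hv_max hmem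
      replace this : ‖x‖⁻¹ * ‖T x‖ ≤ ‖T v‖ := by
        simpa [Function.comp, _root_.map_smul, norm_smul,
          abs_of_nonneg (inv_nonneg.mpr (norm_nonneg x))] using this
      calc ‖T x‖ = ‖x‖ * (‖x‖⁻¹ * ‖T x‖) := by field_simp
      _ ≤ ‖x‖ * ‖T v‖ := by
          exact mul_le_mul_of_nonneg_left this (norm_nonneg x)
      _ = ‖T v‖ * ‖x‖ := mul_comm _ _
  exact le_antisymm h1 h2

end Helpers

lemma toE_inj {ι : Type*} {x y : ι → ℝ} (h : toE x = toE y) : x = y :=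
  (WithLp.equiv 2 (ι → ℝ)).symm.injective h

lemma inner_toE {ι : Type*} [Fintype ι] (x y : ι → ℝ) :
    (inner ℝ (toE x) (toE y) : ℝ) = x ⬝ᵥ y := by
  simp [toE, PiLp.inner_apply, RCLike.inner_apply, dotProduct, mul_comm]

lemma dot_sumElim {α β : Type*} [Fintype α] [Fintype β] (y y' : α → ℝ) (z z' : β → ℝ) :
    Sum.elim y z ⬝ᵥ Sum.elim y' z' = y ⬝ᵥ y' + z ⬝ᵥ z' := by
  simp [dotProduct, Fintype.sum_sum_type]

section Rect

variable {m n : Type*} [Fintype m] [Fintype n] [DecidableEq n]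

lemma sNorm_nonneg' (A : Matrix m n ℝ) : 0 ≤ sNorm A := norm_nonneg _

lemma norm_toE_mulVec_le' (A : Matrix m n ℝ) (x : n → ℝ) :
    ‖toE (A *ᵥ x)‖ ≤ sNorm A * ‖toE x‖ := by
  have h := ((Matrix.toEuclideanLin A).toContinuousLinearMap).le_opNorm (toE x)
  have h2 : ((Matrix.toEuclideanLin A).toContinuousLinearMap) (toE x) = toE (A *ᵥ x) := rfl
  rw [h2] at h
  exact h

lemma sNorm_le_bound' (A : Matrix m n ℝ) {c : ℝ} (hc : 0 ≤ c)
    (h : ∀ x : n → ℝ, ‖toE (A *ᵥ x)‖ ≤ c * ‖toE x‖) : sNorm A ≤ c := by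
  refine ContinuousLinearMap.opNorm_le_bound _ hc fun x => ?_
  exact h (WithLp.equiv 2 (n → ℝ) x)

end Rect

lemma sNorm_fromBlocks_le {α β : Type*} [Fintype α] [DecidableEq α] [Fintype β] [DecidableEq β]
    (A : Matrix α α ℝ) (B : Matrix α β ℝ) (C : Matrix β α ℝ) (D : Matrix β β ℝ) :
    sNorm (Matrix.fromBlocks A B C D) ≤
      Real.sqrt (sNorm A ^ 2 + sNorm B ^ 2 + sNorm C ^ 2 + sNorm D ^ 2) := by
  set a := sNorm A with ha
  set b := sNorm B with hb
  set c := sNorm C with hc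
  set d := sNorm D with hd
  set S := a ^ 2 + b ^ 2 + c ^ 2 + d ^ 2 with hS
  have hS0 : 0 ≤ S := by positivity
  refine sNorm_le_bound' _ (Real.sqrt_nonneg _) fun x => ?_
  set u := x ∘ Sum.inl with hu
  set w := x ∘ Sum.inr with hw
  have hmv : (Matrix.fromBlocks A B C D) *ᵥ x =
      Sum.elim (A *ᵥ u + B *ᵥ w) (C *ᵥ u + D *ᵥ w) := Matrix.fromBlocks_mulVec A B C D x
  set P := ‖toE u‖ with hP
  set Q := ‖toE w‖ with hQ
  have hP0 : 0 ≤ P := norm_nonneg _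
  have hQ0 : 0 ≤ Q := norm_nonneg _
  have h1 : ‖toE (A *ᵥ u + B *ᵥ w)‖ ≤ a * P + b * Q := by
    have : toE (A *ᵥ u + B *ᵥ w) = toE (A *ᵥ u) + toE (B *ᵥ w) := rfl
    rw [this]
    exact (norm_add_le _ _).trans (add_le_add (norm_toE_mulVec_le' A u) (norm_toE_mulVec_le' B w))
  have h2 : ‖toE (C *ᵥ u + D *ᵥ w)‖ ≤ c * P + d * Q := by
    have : toE (C *ᵥ u + D *ᵥ w) = toE (C *ᵥ u) + toE (D *ᵥ w) := rfl
    rw [this]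
    exact (norm_add_le _ _).trans (add_le_add (norm_toE_mulVec_le' C u) (norm_toE_mulVec_le' D w))
  have hsq : ‖toE ((Matrix.fromBlocks A B C D) *ᵥ x)‖ ^ 2 =
      ‖toE (A *ᵥ u + B *ᵥ w)‖ ^ 2 + ‖toE (C *ᵥ u + D *ᵥ w)‖ ^ 2 := by
    rw [hmv, norm_toE_sq, dot_sumElim, ← norm_toE_sq, ← norm_toE_sq]
  have hxsq : ‖toE x‖ ^ 2 = P ^ 2 + Q ^ 2 := by
    rw [hP, hQ, norm_toE_sq, norm_toE_sq, norm_toE_sq, ← dot_sumElim, Sum.elim_comp_inl_inr]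
  have he1 : ‖toE (A *ᵥ u + B *ᵥ w)‖ ^ 2 ≤ (a * P + b * Q) ^ 2 :=
    pow_le_pow_left₀ (norm_nonneg _) h1 2
  have he2 : ‖toE (C *ᵥ u + D *ᵥ w)‖ ^ 2 ≤ (c * P + d * Q) ^ 2 :=
    pow_le_pow_left₀ (norm_nonneg _) h2 2
  have hmain : ‖toE ((Matrix.fromBlocks A B C D) *ᵥ x)‖ ^ 2 ≤
      (Real.sqrt S * ‖toE x‖) ^ 2 := by
    have hSsq : Real.sqrt S ^ 2 = S := Real.sq_sqrt hS0
    rw [mul_pow, hSsq, hxsq, hsq]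
    nlinarith [sq_nonneg (a * Q - b * P), sq_nonneg (c * Q - d * P)]
  have hfin := Real.sqrt_le_sqrt hmain
  rwa [Real.sqrt_sq (norm_nonneg _), Real.sqrt_sq (by positivity)] at hfin


set_option maxHeartbeats 1000000 in
/-- starting-iterate bound: if the orthogonal block matrix
`V = [[M,X₀],[N,Y₀]]` satisfies `‖M−I‖₂ < ε`, `‖N‖₂ < ε`, `‖X₀‖₂ < ε`, `‖Y₀−I‖₂ < ε²`
with `0 < ε < 1/2`, then `‖V − I‖₂ < 2ε` and every principal matrix logarithm `L` of `V`
(skew-symmetric, `exp_m(L) = V`, `‖L‖₂ ≤ π`) satisfies `‖L‖₂ < 2ε√(1−ε²)/(1−2ε²)`. -/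
theorem stmt_8 (p : ℕ) (hp : 1 ≤ p) (ε : ℝ) (hε : 0 < ε) (hεhalf : ε < 1 / 2)
    (M X₀ N Y₀ : Matrix (Fin p) (Fin p) ℝ)
    (V : Matrix (Fin p ⊕ Fin p) (Fin p ⊕ Fin p) ℝ)
    (hVdef : V = Matrix.fromBlocks M X₀ N Y₀)
    (horth : Vᵀ * V = 1 ∧ V * Vᵀ = 1)
    (hM : sNorm (M - 1) < ε) (hN : sNorm N < ε) (hX : sNorm X₀ < ε)
    (hY : sNorm (Y₀ - 1) < ε ^ 2) :
    sNorm (V - 1) < 2 * ε ∧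
    ∀ L : Matrix (Fin p ⊕ Fin p) (Fin p ⊕ Fin p) ℝ, Lᵀ = -L →
      NormedSpace.exp L = V → sNorm L ≤ Real.pi →
      sNorm L < 2 * ε * Real.sqrt (1 - ε ^ 2) / (1 - 2 * ε ^ 2) := by
  have hVblocks : V - 1 = Matrix.fromBlocks (M - 1) X₀ N (Y₀ - 1) := by
    rw [hVdef, ← Matrix.fromBlocks_one]
    ext i j
    rcases i with i | i <;> rcases j with j | j <;>
      simp [Matrix.fromBlocks, Matrix.sub_apply]
  have hpart1 : sNorm (V - 1) < 2 * ε := by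
    have hle := hVblocks ▸ sNorm_fromBlocks_le (M - 1) X₀ N (Y₀ - 1)
    have b1 : sNorm (M - 1) ^ 2 < ε ^ 2 := by nlinarith [sNorm_nonneg' (M - 1)]
    have b2 : sNorm X₀ ^ 2 < ε ^ 2 := by nlinarith [sNorm_nonneg' X₀]
    have b3 : sNorm N ^ 2 < ε ^ 2 := by nlinarith [sNorm_nonneg' N]
    have b4 : sNorm (Y₀ - 1) ^ 2 < ε ^ 4 := by nlinarith [sNorm_nonneg' (Y₀ - 1)]
    have hε2 : ε ^ 2 ≤ 1 := by nlinarith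
    have b5 : ε ^ 4 ≤ ε ^ 2 := by nlinarith [sq_nonneg ε, sq_nonneg (ε ^ 2)]
    have hlt : sNorm (M - 1) ^ 2 + sNorm X₀ ^ 2 + sNorm N ^ 2 + sNorm (Y₀ - 1) ^ 2
        < (2 * ε) ^ 2 := by nlinarith
    have := (Real.sqrt_lt_sqrt (by positivity) hlt).trans_eq (Real.sqrt_sq (by positivity))
    exact hle.trans_lt this
  refine ⟨hpart1, fun L hLskew hexp hLpi => ?_⟩
  have hBpos : 0 < 2 * ε * Real.sqrt (1 - ε ^ 2) / (1 - 2 * ε ^ 2) := by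
    have h1 : 0 < Real.sqrt (1 - ε ^ 2) := Real.sqrt_pos.mpr (by nlinarith)
    have h2 : 0 < 1 - 2 * ε ^ 2 := by nlinarith
    exact div_pos (by positivity) h2
  rcases (sNorm_nonneg L).eq_or_lt with hθ0 | hθpos
  · rw [← hθ0]; exact hBpos
  set θ := sNorm L with hθdef
  haveI : Nonempty (Fin p ⊕ Fin p) := ⟨Sum.inl ⟨0, hp⟩⟩
  obtain ⟨v, hv1, hvL⟩ := exists_attains L
  have hadj : ∀ w y : (Fin p ⊕ Fin p) → ℝ, (L *ᵥ w) ⬝ᵥ y = -(w ⬝ᵥ (L *ᵥ y)) := by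
    intro w y
    calc (L *ᵥ w) ⬝ᵥ y = y ⬝ᵥ (L *ᵥ w) := dotProduct_comm _ _
      _ = (y ᵥ* L) ⬝ᵥ w := Matrix.dotProduct_mulVec _ _ _
      _ = (Lᵀ *ᵥ y) ⬝ᵥ w := by rw [Matrix.mulVec_transpose]
      _ = -((L *ᵥ y) ⬝ᵥ w) := by rw [hLskew, Matrix.neg_mulVec, neg_dotProduct]
      _ = -(w ⬝ᵥ (L *ᵥ y)) := by rw [dotProduct_comm]
  have hvv : v ⬝ᵥ v = 1 := by
    have h := norm_toE_sq v
    rw [hv1] at h; simpa using h.symm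
  have hLvLv : (L *ᵥ v) ⬝ᵥ (L *ᵥ v) = θ ^ 2 := by
    rw [← norm_toE_sq, hvL]
  have hvLv : v ⬝ᵥ (L *ᵥ v) = 0 := by
    have h := hadj v v
    have h2 : (L *ᵥ v) ⬝ᵥ v = v ⬝ᵥ (L *ᵥ v) := dotProduct_comm _ _
    linarith [h, h2]
  set u : (Fin p ⊕ Fin p) → ℝ := θ⁻¹ • (L *ᵥ v) with hu
  have hθne : θ ≠ 0 := ne_of_gt hθpos
  have hLv : L *ᵥ v = θ • u := by
    rw [hu, smul_smul, mul_inv_cancel₀ hθne, one_smul]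
  -- L *ᵥ (L *ᵥ v) = -(θ^2) • v
  have hinner : (L *ᵥ (L *ᵥ v)) ⬝ᵥ v = -(θ ^ 2) := by
    rw [hadj (L *ᵥ v) v, hLvLv]
  have hbound : ‖toE (L *ᵥ (L *ᵥ v))‖ ≤ θ ^ 2 := by
    have := norm_toE_mulVec_le' L (L *ᵥ v)
    rw [hvL] at this
    calc ‖toE (L *ᵥ (L *ᵥ v))‖ ≤ θ * θ := this
      _ = θ ^ 2 := (pow_two θ).symm
  have hkey0 : ‖toE (L *ᵥ (L *ᵥ v)) + (θ ^ 2) • toE v‖ ^ 2 ≤ 0 := by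
    rw [norm_add_sq_real, real_inner_smul_right, inner_toE, hinner, norm_smul, hv1]
    simp only [Real.norm_eq_abs, mul_one]
    nlinarith [norm_nonneg (toE (L *ᵥ (L *ᵥ v))), hbound, abs_nonneg (θ ^ 2),
      sq_abs (θ ^ 2)]
  have hkey1 : toE (L *ᵥ (L *ᵥ v)) + (θ ^ 2) • toE v = 0 := by
    have hsq0 : ‖toE (L *ᵥ (L *ᵥ v)) + (θ ^ 2) • toE v‖ ^ 2 = 0 :=
      le_antisymm hkey0 (sq_nonneg _)
    have h0 : ‖toE (L *ᵥ (L *ᵥ v)) + (θ ^ 2) • toE v‖ = 0 :=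
      pow_eq_zero_iff two_ne_zero |>.mp hsq0
    exact norm_eq_zero.mp h0
  have hSv : L *ᵥ (L *ᵥ v) = (-(θ ^ 2)) • v := by
    apply toE_inj
    have := eq_neg_of_add_eq_zero_left hkey1
    rw [this]
    show -((θ ^ 2) • toE v) = toE ((-(θ ^ 2)) • v)
    rw [← neg_smul]
    rfl
  have hLu : L *ᵥ u = (-θ) • v := by
    rw [hu, Matrix.mulVec_smul, hSv, smul_smul]
    congr 1
    field_simp
  have huu : u ⬝ᵥ u = 1 := by
    rw [hu]
    simp only [smul_dotProduct, dotProduct_smul, hLvLv, smul_eq_mul]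
    field_simp
  have hvu : v ⬝ᵥ u = 0 := by
    rw [hu]
    simp [dotProduct_smul, hvLv, smul_eq_mul]
  have huv : u ⬝ᵥ v = 0 := by rw [dotProduct_comm]; exact hvu
  -- powers of L applied to v
  have key : ∀ k : ℕ, L ^ (2 * k) *ᵥ v = ((-(θ ^ 2)) ^ k) • v ∧
      L ^ (2 * k + 1) *ᵥ v = (((-(θ ^ 2)) ^ k) * θ) • u := by
    intro k
    induction k with
    | zero =>
      constructor
      · simp [Matrix.one_mulVec]
      · simpa [pow_one] using hLv
    | succ k ih =>
      obtain ⟨ihe, iho⟩ := ih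
      have heven : L ^ (2 * (k + 1)) *ᵥ v = ((-(θ ^ 2)) ^ (k + 1)) • v := by
        have h2k : 2 * (k + 1) = (2 * k + 1) + 1 := by ring
        rw [h2k, pow_succ', ← Matrix.mulVec_mulVec, iho, Matrix.mulVec_smul, hLu, smul_smul,
          pow_succ]
        congr 1
        ring
      refine ⟨heven, ?_⟩
      rw [pow_succ', ← Matrix.mulVec_mulVec, heven, Matrix.mulVec_smul, hLv, smul_smul]
  -- exponential series applied to v
  letI : SeminormedRing (Matrix (Fin p ⊕ Fin p) (Fin p ⊕ Fin p) ℝ) :=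
    Matrix.linftyOpSemiNormedRing
  letI : NormedRing (Matrix (Fin p ⊕ Fin p) (Fin p ⊕ Fin p) ℝ) := Matrix.linftyOpNormedRing
  letI : NormedAlgebra ℝ (Matrix (Fin p ⊕ Fin p) (Fin p ⊕ Fin p) ℝ) :=
    Matrix.linftyOpNormedAlgebra
  have hs : HasSum (fun n : ℕ => ((Nat.factorial n : ℝ)⁻¹) • L ^ n) (NormedSpace.exp L) :=
    NormedSpace.exp_series_hasSum_exp' L
  let mvlin : Matrix (Fin p ⊕ Fin p) (Fin p ⊕ Fin p) ℝ →ₗ[ℝ] ((Fin p ⊕ Fin p) → ℝ) :=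
    { toFun := fun A => A *ᵥ v
      map_add' := fun A B => Matrix.add_mulVec A B v
      map_smul' := fun c A => Matrix.smul_mulVec c A v }
  let mv : Matrix (Fin p ⊕ Fin p) (Fin p ⊕ Fin p) ℝ →L[ℝ] ((Fin p ⊕ Fin p) → ℝ) :=
    ⟨mvlin, mvlin.continuous_of_finiteDimensional⟩
  have hexpv : HasSum (fun n : ℕ => ((Nat.factorial n : ℝ)⁻¹) • (L ^ n *ᵥ v))
      ((NormedSpace.exp L) *ᵥ v) := by
    have h := hs.mapL mv
    have h2 : ∀ n : ℕ, mv (((Nat.factorial n : ℝ))⁻¹ • L ^ n) =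
        ((Nat.factorial n : ℝ))⁻¹ • (L ^ n *ᵥ v) := fun n => mv.map_smul _ _
    have h3 : mv (NormedSpace.exp L) = NormedSpace.exp L *ᵥ v := rfl
    simp only [h2, h3] at h
    exact h
  have hcs : HasSum (fun n : ℕ => ((Nat.factorial n : ℝ)⁻¹) • (L ^ n *ᵥ v))
      (Real.cos θ • v + Real.sin θ • u) := by
    refine HasSum.even_add_odd ?_ ?_
    · have h := (Real.hasSum_cos θ).smul_const v
      convert h using 1
      funext k
      rw [(key k).1, smul_smul]
      congr 1
      rw [show (-(θ ^ 2)) ^ k = (-1 : ℝ) ^ k * θ ^ (2 * k) by rw [neg_pow, pow_mul]]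
      ring
    · have h := (Real.hasSum_sin θ).smul_const u
      convert h using 1
      funext k
      rw [(key k).2, smul_smul]
      congr 1
      rw [show (-(θ ^ 2)) ^ k = (-1 : ℝ) ^ k * θ ^ (2 * k) by rw [neg_pow, pow_mul],
        pow_succ]
      ring
  have hVveq : V *ᵥ v = Real.cos θ • v + Real.sin θ • u := by
    rw [← hexp]
    exact hexpv.unique hcs
  have hVv : (V - 1) *ᵥ v = (Real.cos θ - 1) • v + Real.sin θ • u := by
    rw [Matrix.sub_mulVec, Matrix.one_mulVec, hVveq, sub_smul, one_smul]
    abel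
  have hnorm2 : ‖toE ((V - 1) *ᵥ v)‖ ^ 2 = 2 - 2 * Real.cos θ := by
    rw [norm_toE_sq, hVv]
    simp only [add_dotProduct, dotProduct_add, smul_dotProduct,
      dotProduct_smul, hvv, huu, hvu, huv, smul_eq_mul]
    nlinarith [Real.sin_sq_add_cos_sq θ]
  have hlt : ‖toE ((V - 1) *ᵥ v)‖ < 2 * ε := by
    have h := norm_toE_mulVec_le' (V - 1) v
    rw [hv1, mul_one] at h
    exact h.trans_lt hpart1
  have hcosθ : 1 - 2 * ε ^ 2 < Real.cos θ := by
    nlinarith [norm_nonneg (toE ((V - 1) *ᵥ v))]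
  -- trigonometric endgame
  set φ := 2 * Real.arcsin ε with hφ
  have hε1 : ε ≤ 1 := le_of_lt (lt_trans hεhalf (by norm_num))
  have hsφ : Real.sin φ = 2 * ε * Real.sqrt (1 - ε ^ 2) := by
    rw [hφ, Real.sin_two_mul, Real.sin_arcsin (by linarith) hε1, Real.cos_arcsin]
  have hcφ : Real.cos φ = 1 - 2 * ε ^ 2 := by
    rw [hφ, Real.cos_two_mul, Real.cos_arcsin, Real.sq_sqrt (by nlinarith)]
    ring
  have hφpos : 0 < φ := by
    rw [hφ]
    have := Real.arcsin_pos.mpr hε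
    linarith
  have hφle2 : φ ≤ Real.pi := by
    have := Real.arcsin_le_pi_div_two ε
    rw [hφ]
    linarith
  have hφlt : φ < Real.pi / 2 := by
    by_contra hcon
    push_neg at hcon
    have h := Real.cos_nonpos_of_pi_div_two_le_of_le hcon (by linarith [Real.pi_pos])
    rw [hcφ] at h
    nlinarith
  have htan : φ < Real.tan φ := Real.lt_tan hφpos hφlt
  have htanφ : Real.tan φ = 2 * ε * Real.sqrt (1 - ε ^ 2) / (1 - 2 * ε ^ 2) := by
    rw [Real.tan_eq_sin_div_cos, hsφ, hcφ]
  by_contra hcon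
  push_neg at hcon
  have hφθ : φ < θ := by
    calc φ < Real.tan φ := htan
      _ = 2 * ε * Real.sqrt (1 - ε ^ 2) / (1 - 2 * ε ^ 2) := htanφ
      _ ≤ θ := hcon
  have hmono := Real.cos_lt_cos_of_nonneg_of_le_pi (le_of_lt hφpos) hLpi hφθ
  rw [hcφ] at hmono
  linarith
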